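/- For every t ∈ (−1, 1), define x(t) = arccos(t²), y(t) = −(3/2)·t·√(1 − t⁴), and z(t) = t³. Then x is differentiable on (−1, 1) with x'(t) = −2t/√(1 − t⁴), and for every t ∈ (−1, 1) one has z'(t) = y(t)·x'(t); that is, the curve t ↦ (x(t), y(t), z(t)) is Legendrian for the contact form dz − y dx. -/

import Mathlib

/-- The parameterization `x(t) = arccos(t²)`, `y(t) = −(3/2)t√(1−t⁴)`, `z(t) = t³`
of the cusp of the standard Legendrian unknot: on `(−1, 1)` one has
`x'(t) = −2t/√(1−t⁴)` and `z'(t) = y(t)·x'(t)`, i.e. the curve is Legendrian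
for `dz − y dx`. -/
theorem stmt_4 :
    ∀ t ∈ Set.Ioo (-1 : ℝ) 1,
      HasDerivAt (fun u : ℝ => Real.arccos (u ^ 2))
        (-2 * t / Real.sqrt (1 - t ^ 4)) t ∧
      deriv (fun u : ℝ => u ^ 3) t
        = (-(3 / 2) * t * Real.sqrt (1 - t ^ 4)) * (-2 * t / Real.sqrt (1 - t ^ 4)) := by
  intro t ht
  obtain ⟨h1, h2⟩ := ht
  have habs : |t| < 1 := abs_lt.2 ⟨h1, h2⟩
  have hsq : t ^ 2 < 1 := by nlinarith [sq_abs t, abs_nonneg t]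
  have hne1 : t ^ 2 ≠ 1 := ne_of_lt hsq
  have hne1' : t ^ 2 ≠ -1 := by nlinarith [sq_nonneg t]
  have h4 : t ^ 4 < 1 := by nlinarith [sq_nonneg t]
  have hpos : 0 < 1 - t ^ 4 := by linarith
  have hsqrt : Real.sqrt (1 - t ^ 4) ≠ 0 := by positivity
  constructor
  · have hp : HasDerivAt (fun u : ℝ => u ^ 2) (2 * t) t := by
      simpa using hasDerivAt_pow 2 t
    have hg : HasDerivAt Real.arccos (-(1 / Real.sqrt (1 - (t ^ 2) ^ 2)))
        ((fun u : ℝ => u ^ 2) t) := Real.hasDerivAt_arccos hne1' hne1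
    have h := HasDerivAt.comp (h₂ := Real.arccos) (h := fun u : ℝ => u ^ 2)
      (x := t) hg hp
    refine h.congr_deriv ?_
    have : (t ^ 2) ^ 2 = t ^ 4 := by ring
    rw [this]
    field_simp
  · rw [deriv_pow_field]
    field_simp
    ring
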